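/- Let a ≥ 1 and b ≥ 0 be integers, let f : ℕ → ℂ, and let z ∈ ℂ be such that the series ∑_{n≥0} |f_n| |z|^n converges. Then ∑_{n≥0} f_n z^n / (a n + b)! = (1/(2π)) ∫_{-π}^{π} F(z e^{-i t}) · E_{a,b}(e^{i t}) dt, where F(w) = ∑_{n≥0} f_n w^n and E_{a,b}(w) = ∑_{m≥0} w^m / (a m + b)!. -/

import Mathlib

open MeasureTheory intervalIntegral

private lemma norm_exp_I_t (t : ℝ) : ‖Complex.exp (Complex.I * (t : ℂ))‖ = 1 := by
  rw [Complex.norm_exp]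
  simp

private lemma norm_exp_neg_I_t (t : ℝ) : ‖Complex.exp (-(Complex.I * (t : ℂ)))‖ = 1 := by
  rw [Complex.norm_exp]
  simp

private lemma summable_E (a b : ℕ) (ha : 1 ≤ a) :
    Summable (fun m : ℕ => (1 : ℝ) / (a * m + b).factorial) := by
  have h := Real.summable_pow_div_factorial 1
  simp only [one_pow] at h
  refine h.of_nonneg_of_le (fun m => by positivity) (fun m => ?_)
  gcongr
  exact le_trans (Nat.le_mul_of_pos_left m ha) (Nat.le_add_right (a * m) b)

private lemma orth (m n : ℕ) :
    (∫ t in (-Real.pi)..Real.pi,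
      Complex.exp (Complex.I * (t : ℂ)) ^ m * Complex.exp (-(Complex.I * (t : ℂ))) ^ n)
      = if m = n then ((2 * Real.pi : ℝ) : ℂ) else 0 := by
  have key : ∀ t : ℝ, Complex.exp (Complex.I * (t : ℂ)) ^ m *
      Complex.exp (-(Complex.I * (t : ℂ))) ^ n
      = Complex.exp ((((m : ℂ) - n) * Complex.I) * (t : ℂ)) := by
    intro t
    rw [← Complex.exp_nat_mul, ← Complex.exp_nat_mul, ← Complex.exp_add]
    ring_nf
  simp only [key]
  by_cases h : m = n
  · subst h
    simp only [sub_self, zero_mul, Complex.exp_zero]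
    rw [intervalIntegral.integral_const, if_pos trivial, Complex.real_smul, mul_one]
    push_cast
    ring
  · have hmn : ((m : ℂ)) ≠ n := by exact_mod_cast h
    have hc : ((m : ℂ) - n) * Complex.I ≠ 0 :=
      mul_ne_zero (sub_ne_zero.mpr hmn) Complex.I_ne_zero
    rw [integral_exp_mul_complex hc, if_neg h]
    have hz : ∀ s : ℝ, ((m : ℂ) - n) * Complex.I * (s : ℂ)
        = ((((m - n : ℤ) : ℂ)) * (s : ℂ)) * Complex.I := by
      intro s; push_cast; ring
    rw [hz, hz, Complex.exp_mul_I, Complex.exp_mul_I]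
    have s1 : Complex.sin (((m - n : ℤ) : ℂ) * (Real.pi : ℂ)) = 0 :=
      Complex.sin_int_mul_pi (m - n)
    have s2 : Complex.sin (((m - n : ℤ) : ℂ) * ((-Real.pi : ℝ) : ℂ)) = 0 := by
      have h2 := Complex.sin_int_mul_pi (-(m - n))
      push_cast at h2 ⊢
      rw [show ((m : ℂ) - n) * -(Real.pi : ℂ) = (-((m:ℂ) - n)) * (Real.pi : ℂ) by ring]
      exact h2
    have c12 : Complex.cos (((m - n : ℤ) : ℂ) * ((-Real.pi : ℝ) : ℂ))
        = Complex.cos (((m - n : ℤ) : ℂ) * (Real.pi : ℂ)) := by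
      push_cast
      rw [show ((m : ℂ) - n) * -(Real.pi : ℂ) = -(((m:ℂ) - n) * (Real.pi : ℂ)) by ring,
        Complex.cos_neg]
    rw [s1, s2, c12]
    simp

/-- For integers `a ≥ 1`, `b ≥ 0`: if `∑ ‖f n‖ ‖z‖^n` converges, then
`∑_{n≥0} f_n z^n / (an+b)! = (1/(2π)) ∫_{-π}^{π} F(z e^{-it}) E_{a,b}(e^{it}) dt`,
where `F(w) = ∑_{n≥0} f_n w^n` and `E_{a,b}(w) = ∑_{m≥0} w^m/(am+b)!`. -/
theorem multifactorial_integral_formula (a b : ℕ) (ha : 1 ≤ a) (f : ℕ → ℂ) (z : ℂ)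
    (hsum : Summable (fun n : ℕ => ‖f n‖ * ‖z‖ ^ n)) :
    ∑' n : ℕ, f n * z ^ n / ((a * n + b).factorial : ℂ) =
      ((2 * Real.pi : ℝ) : ℂ)⁻¹ *
        ∫ t in (-Real.pi)..Real.pi,
          (∑' n : ℕ, f n * (z * Complex.exp (-(Complex.I * (t : ℂ)))) ^ n) *
            ∑' m : ℕ, Complex.exp (Complex.I * (t : ℂ)) ^ m / ((a * m + b).factorial : ℂ) := by
  have hpi : (0:ℝ) < Real.pi := Real.pi_pos
  set G : ℕ × ℕ → ℝ → ℂ := fun p t =>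
    (f p.1 * (z * Complex.exp (-(Complex.I * (t : ℂ)))) ^ p.1) *
      (Complex.exp (Complex.I * (t : ℂ)) ^ p.2 / ((a * p.2 + b).factorial : ℂ)) with hG
  have hnormG : ∀ p : ℕ × ℕ, ∀ t : ℝ,
      ‖G p t‖ = (‖f p.1‖ * ‖z‖ ^ p.1) * (1 / (a * p.2 + b).factorial) := by
    intro p t
    simp only [hG, norm_mul, norm_div, norm_pow, norm_exp_I_t, norm_exp_neg_I_t, one_pow,
      mul_one, Complex.norm_natCast]
    try ring
  have hsum1 : ∀ t : ℝ, Summable fun n : ℕ =>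
      ‖f n * (z * Complex.exp (-(Complex.I * (t : ℂ)))) ^ n‖ := by
    intro t
    simp only [norm_mul, norm_pow, norm_exp_neg_I_t, mul_one]
    exact hsum
  have hsum2 : ∀ t : ℝ, Summable fun m : ℕ =>
      ‖Complex.exp (Complex.I * (t : ℂ)) ^ m / ((a * m + b).factorial : ℂ)‖ := by
    intro t
    simp only [norm_div, norm_pow, norm_exp_I_t, one_pow, Complex.norm_natCast]
    exact summable_E a b ha
  have hsumG : Summable fun p : ℕ × ℕ =>
      (‖f p.1‖ * ‖z‖ ^ p.1) * ((1:ℝ) / (a * p.2 + b).factorial) :=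
    hsum.mul_of_nonneg (summable_E a b ha) (fun n => by positivity) (fun m => by positivity)
  have step1 : ∀ t : ℝ,
      (∑' n : ℕ, f n * (z * Complex.exp (-(Complex.I * (t : ℂ)))) ^ n) *
        (∑' m : ℕ, Complex.exp (Complex.I * (t : ℂ)) ^ m / ((a * m + b).factorial : ℂ))
      = ∑' p : ℕ × ℕ, G p t := fun t =>
    tsum_mul_tsum_of_summable_norm (hsum1 t) (hsum2 t)
  rw [intervalIntegral.integral_congr (fun t _ => step1 t)]
  have hGcont : ∀ p : ℕ × ℕ, Continuous (G p) := by
    intro p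
    rw [hG]
    fun_prop
  have hGint : ∀ p : ℕ × ℕ, IntegrableOn (G p) (Set.Ioc (-Real.pi) Real.pi) volume :=
    fun p => (hGcont p).integrableOn_Ioc
  have hint_norm : ∀ p : ℕ × ℕ, (∫ t in Set.Ioc (-Real.pi) Real.pi, ‖G p t‖)
      = (2 * Real.pi) * ((‖f p.1‖ * ‖z‖ ^ p.1) * (1 / (a * p.2 + b).factorial)) := by
    intro p
    simp_rw [hnormG p]
    rw [MeasureTheory.setIntegral_const, smul_eq_mul, Real.volume_real_Ioc_of_le
      (by linarith)]
    ring_nf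
  rw [intervalIntegral.integral_of_le (by linarith),
    ← MeasureTheory.integral_tsum_of_summable_integral_norm hGint (by
      simp only [hint_norm]
      exact hsumG.mul_left _)]
  have hval : ∀ p : ℕ × ℕ, (∫ t in Set.Ioc (-Real.pi) Real.pi, G p t)
      = (f p.1 * z ^ p.1 / ((a * p.2 + b).factorial : ℂ)) *
        (if p.2 = p.1 then ((2 * Real.pi : ℝ) : ℂ) else 0) := by
    intro p
    rw [← intervalIntegral.integral_of_le (by linarith : -Real.pi ≤ Real.pi)]
    have hGt : ∀ t : ℝ, G p t = (f p.1 * z ^ p.1 / ((a * p.2 + b).factorial : ℂ)) *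
        (Complex.exp (Complex.I * (t : ℂ)) ^ p.2 *
          Complex.exp (-(Complex.I * (t : ℂ))) ^ p.1) := by
      intro t
      simp only [hG, mul_pow]
      ring
    rw [intervalIntegral.integral_congr (fun t _ => hGt t),
      intervalIntegral.integral_const_mul, orth p.2 p.1]
  rw [tsum_congr hval]
  have hprod : Summable fun p : ℕ × ℕ =>
      (f p.1 * z ^ p.1 / ((a * p.2 + b).factorial : ℂ)) *
        (if p.2 = p.1 then ((2 * Real.pi : ℝ) : ℂ) else 0) := by
    apply Summable.of_norm_bounded ((hsumG.mul_left (2 * Real.pi)))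
    intro p
    rw [norm_mul]
    have h1 : ‖f p.1 * z ^ p.1 / ((a * p.2 + b).factorial : ℂ)‖
        = (‖f p.1‖ * ‖z‖ ^ p.1) * (1 / (a * p.2 + b).factorial) := by
      simp only [norm_div, norm_mul, norm_pow, Complex.norm_natCast]
      ring
    have h2 : ‖(if p.2 = p.1 then ((2 * Real.pi : ℝ) : ℂ) else 0)‖ ≤ 2 * Real.pi := by
      split <;> simp <;> [skip; positivity]
      rw [abs_of_nonneg (by positivity)]
    calc ‖f p.1 * z ^ p.1 / ((a * p.2 + b).factorial : ℂ)‖ *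
          ‖(if p.2 = p.1 then ((2 * Real.pi : ℝ) : ℂ) else 0)‖
        ≤ ((‖f p.1‖ * ‖z‖ ^ p.1) * (1 / (a * p.2 + b).factorial)) * (2 * Real.pi) := by
          rw [h1]; exact mul_le_mul_of_nonneg_left h2 (by positivity)
      _ = 2 * Real.pi * (‖f p.1‖ * ‖z‖ ^ p.1 * (1 / ↑(a * p.2 + b).factorial)) := by ring
  have hfib : ∀ n : ℕ, Summable fun m : ℕ =>
      (f n * z ^ n / ((a * m + b).factorial : ℂ)) *
        (if m = n then ((2 * Real.pi : ℝ) : ℂ) else 0) := by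
    intro n
    have he : (fun m : ℕ => (f n * z ^ n / ((a * m + b).factorial : ℂ)) *
        (if m = n then ((2 * Real.pi : ℝ) : ℂ) else 0))
        = fun m : ℕ => if m = n then
            (f n * z ^ n / ((a * n + b).factorial : ℂ)) * ((2 * Real.pi : ℝ) : ℂ) else 0 := by
      funext m
      by_cases hm : m = n
      · subst hm; simp
      · simp [hm]
    rw [he]
    exact (hasSum_ite_eq n _).summable
  rw [Summable.tsum_prod' hprod hfib]
  have hinner : ∀ n : ℕ, (∑' m : ℕ, (f n * z ^ n / ((a * m + b).factorial : ℂ)) *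
      (if m = n then ((2 * Real.pi : ℝ) : ℂ) else 0))
      = ((2 * Real.pi : ℝ) : ℂ) * (f n * z ^ n / ((a * n + b).factorial : ℂ)) := by
    intro n
    rw [tsum_eq_single n (fun m hm => by rw [if_neg hm, mul_zero])]
    rw [if_pos rfl]
    ring
  rw [tsum_congr hinner, tsum_mul_left, ← mul_assoc, inv_mul_cancel₀
    (Complex.ofReal_ne_zero.mpr (by positivity)), one_mul]
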